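/- In a planar trivalent fat graph in which every edge separates two distinct faces, for every face F₁ there exists a face F₂ such that F₁ and F₂ share exactly one edge. -/

import Mathlib

open Equiv Equiv.Perm

set_option linter.unusedSectionVars false

namespace STP

variable {D : Type} [Fintype D] [DecidableEq D]

/-- The setoid of `SameCycle`. -/
def scS (π : Perm D) : Setoid D :=
  ⟨π.SameCycle, ⟨fun _ => Equiv.Perm.SameCycle.refl _ _,
    Equiv.Perm.SameCycle.symm, Equiv.Perm.SameCycle.trans⟩⟩

/-- Number of cycles (orbits) of a permutation. -/
noncomputable def cyc (π : Perm D) : ℕ := Nat.card (Quotient (scS π))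

lemma pow_apply_succ (π : Perm D) (n : ℕ) (x : D) :
    (π ^ (n + 1)) x = π ((π ^ n) x) := by
  rw [pow_succ', Equiv.Perm.mul_apply]

lemma sc_exists_nat {π : Perm D} {x y : D} (h : π.SameCycle x y) :
    ∃ n : ℕ, (π ^ n) x = y := by
  obtain ⟨i, _, hi⟩ := h.exists_pow_eq'
  exact ⟨i, hi⟩

lemma sc_of_pow (π : Perm D) (n : ℕ) (x : D) : π.SameCycle x ((π ^ n) x) :=
  ⟨(n : ℤ), by rw [zpow_natCast]⟩

lemma exists_period (π : Perm D) (x : D) : ∃ n, 0 < n ∧ (π ^ n) x = x :=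
  ⟨orderOf π, orderOf_pos π, by rw [pow_orderOf_eq_one]; rfl⟩

/-- if a set is closed under `π`, all forward powers stay in it. -/
lemma pow_mem_closed {π : Perm D} {S : Set D} (hS : ∀ z ∈ S, π z ∈ S) {x : D}
    (hx : x ∈ S) : ∀ n : ℕ, (π ^ n) x ∈ S := by
  intro n
  induction n with
  | zero => simpa using hx
  | succ n ih => rw [pow_apply_succ]; exact hS _ ih

lemma sc_mem_closed {π : Perm D} {S : Set D} (hS : ∀ z ∈ S, π z ∈ S) {x y : D}
    (hx : x ∈ S) (h : π.SameCycle x y) : y ∈ S := by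
  obtain ⟨n, rfl⟩ := sc_exists_nat h
  exact pow_mem_closed hS hx n

/-- transfer of SameCycle along agreement on an invariant set. -/
lemma sc_congr {π₁ π₂ : Perm D} (S : Set D) (hagree : ∀ z ∈ S, π₁ z = π₂ z)
    (hclosed : ∀ z ∈ S, π₂ z ∈ S) {x y : D} (hx : x ∈ S) (h : π₂.SameCycle x y) :
    π₁.SameCycle x y := by
  obtain ⟨n, rfl⟩ := sc_exists_nat h
  have H : ∀ n : ℕ, (π₂ ^ n) x ∈ S ∧ (π₁ ^ n) x = (π₂ ^ n) x := by
    intro n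
    induction n with
    | zero => exact ⟨hx, rfl⟩
    | succ n ih =>
      refine ⟨by rw [pow_apply_succ]; exact hclosed _ ih.1, ?_⟩
      rw [pow_apply_succ, pow_apply_succ, ih.2, hagree _ ih.1]
  exact ⟨(n : ℤ), by rw [zpow_natCast, (H n).2]⟩

/-- if an equivalence relation contains all steps of `γ`, it contains `γ.SameCycle`. -/
lemma sc_implies (γ : Perm D) (s : Setoid D) (hstep : ∀ z, s.r z (γ z))
    {x y : D} (h : γ.SameCycle x y) : s.r x y := by
  obtain ⟨n, rfl⟩ := sc_exists_nat h
  have H : ∀ n : ℕ, s.r x ((γ ^ n) x) := by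
    intro n
    induction n with
    | zero => simpa using s.iseqv.refl x
    | succ n ih =>
      rw [pow_apply_succ]
      exact s.iseqv.trans ih (hstep _)
  exact H n

/-- Counting: if `s'`-classes are `s`-classes except possibly merging the classes of
`a` and `b`, the number of `s`-classes is at most one more. -/
lemma quot_le_of_ker (s s' : Setoid D) (a b : D)
    (hle : ∀ x y, s.r x y → s'.r x y)
    (hker : ∀ x y, s'.r x y → s.r x y ∨ ((s.r x a ∨ s.r x b) ∧ (s.r y a ∨ s.r y b))) :
    Nat.card (Quotient s) ≤ Nat.card (Quotient s') + 1 := by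
  classical
  let f : D → Option (Quotient s') := fun x =>
    if s.r x a then none else some (Quotient.mk s' x)
  have wd : ∀ x y, s.r x y → f x = f y := by
    intro x y hxy
    by_cases hxa : s.r x a
    · have hya : s.r y a := s.iseqv.trans (s.iseqv.symm hxy) hxa
      simp [f, hxa, hya]
    · have hya : ¬s.r y a := fun hya => hxa (s.iseqv.trans hxy hya)
      simp only [f, if_neg hxa, if_neg hya]
      exact congrArg some (Quotient.sound (hle _ _ hxy))
  let F : Quotient s → Option (Quotient s') := Quotient.lift f wd
  have hinj : Function.Injective F := by
    intro u v
    induction u using Quotient.ind with | _ x => ?_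
    induction v using Quotient.ind with | _ y => ?_
    intro huv
    by_cases hxa : s.r x a <;> by_cases hya : s.r y a
    · exact Quotient.sound (s.iseqv.trans hxa (s.iseqv.symm hya))
    · simp [F, f, hxa, hya] at huv
    · simp [F, f, hxa, hya] at huv
    · simp only [F, f, if_neg hxa, if_neg hya, Quotient.lift_mk, Option.some.injEq] at huv
      have hxy : s'.r x y := Quotient.exact huv
      rcases hker x y hxy with h | ⟨hx, hy⟩
      · exact Quotient.sound h
      · rcases hx with hx | hx
        · exact absurd hx hxa
        · rcases hy with hy | hy
          · exact absurd hy hya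
          · exact Quotient.sound (s.iseqv.trans hx (s.iseqv.symm hy))
  calc Nat.card (Quotient s) ≤ Nat.card (Option (Quotient s')) :=
        Nat.card_le_card_of_injective F hinj
    _ = Nat.card (Quotient s') + 1 := Finite.card_option

/-- Counting: refining a partition by splitting the class of `a`,`b` adds a class. -/
lemma quot_add_one_le (s s' : Setoid D) (a b : D)
    (hle : ∀ x y, s'.r x y → s.r x y) (hab : s.r a b) (hnab : ¬s'.r a b) :
    Nat.card (Quotient s) + 1 ≤ Nat.card (Quotient s') := by
  classical
  let F : Quotient s' → Quotient s :=
    Quotient.lift (fun x => Quotient.mk s x) fun x y h => Quotient.sound (hle x y h)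
  have hsurj : Function.Surjective F := by
    intro u
    induction u using Quotient.ind with | _ x => exact ⟨Quotient.mk s' x, rfl⟩
  have hninj : ¬Function.Injective F := by
    intro hinj
    exact hnab (Quotient.exact (hinj (a₁ := Quotient.mk s' a) (a₂ := Quotient.mk s' b)
      (Quotient.sound hab)))
  haveI : Fintype (Quotient s) := Fintype.ofFinite _
  haveI : Fintype (Quotient s') := Fintype.ofFinite _
  have := Fintype.card_lt_of_surjective_not_injective F hsurj hninj
  rw [Nat.card_eq_fintype_card, Nat.card_eq_fintype_card]
  omega



lemma pow_mul_period {π : Perm D} {x : D} {p : ℕ} (hp : (π ^ p) x = x) (q : ℕ) :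
    (π ^ (p * q)) x = x := by
  induction q with
  | zero => simp
  | succ q ih => rw [Nat.mul_succ, pow_add, Equiv.Perm.mul_apply, hp, ih]

lemma pow_mod {π : Perm D} {x : D} {p : ℕ} (hp : (π ^ p) x = x) (n : ℕ) :
    (π ^ n) x = (π ^ (n % p)) x := by
  conv_lhs => rw [← Nat.mod_add_div n p]
  rw [pow_add, Equiv.Perm.mul_apply, pow_mul_period hp]

lemma pow_inj {π : Perm D} {x : D} {p : ℕ} (hpmin : ∀ j, 0 < j → j < p → (π ^ j) x ≠ x)
    {i j : ℕ} (hij : i < j) (hj : j < p) : (π ^ i) x ≠ (π ^ j) x := by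
  intro he
  have h1 : (π ^ j) x = (π ^ i) ((π ^ (j - i)) x) := by
    rw [← Equiv.Perm.mul_apply, ← pow_add]
    congr 2
    omega
  have h2 : x = (π ^ (j - i)) x := (Equiv.injective (π ^ i)) (by rw [← h1, he])
  exact hpmin (j - i) (by omega) (by omega) h2.symm

section Swap

variable (π : Perm D) {a b : D}

/-- If `a,b` are in different cycles, after multiplying by the swap they are in one. -/
lemma sc_swap_of_not (hab : a ≠ b) (h : ¬π.SameCycle a b) :
    (Equiv.swap a b * π).SameCycle a b := by
  classical
  set γ := Equiv.swap a b * π with hγ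
  obtain ⟨p, hp0, hpa⟩ := exists_period π a
  -- minimal period
  have hex : ∃ n, 0 < n ∧ (π ^ n) a = a := ⟨p, hp0, hpa⟩
  set q := Nat.find hex with hq
  obtain ⟨hq0, hqa⟩ : 0 < q ∧ (π ^ q) a = a := Nat.find_spec hex
  have hmin : ∀ j, 0 < j → j < q → (π ^ j) a ≠ a := by
    intro j hj0 hjq hja
    exact Nat.find_min hex hjq ⟨hj0, hja⟩
  have hnb : ∀ j : ℕ, (π ^ j) a ≠ b := by
    intro j hj
    exact h ⟨(j : ℤ), by rw [zpow_natCast]; exact hj⟩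
  have key : ∀ j, j < q → (γ ^ j) a = (π ^ j) a := by
    intro j hj
    induction j with
    | zero => rfl
    | succ n ih =>
      have hn : n < q := Nat.lt_of_succ_lt hj
      rw [pow_apply_succ, pow_apply_succ, ih hn, hγ, Equiv.Perm.mul_apply]
      have h1 : π ((π ^ n) a) ≠ a := by
        rw [← pow_apply_succ]; exact hmin _ (Nat.succ_pos n) hj
      have h2 : π ((π ^ n) a) ≠ b := by
        rw [← pow_apply_succ]; exact hnb _
      exact Equiv.swap_apply_of_ne_of_ne h1 h2
  have hfin : (γ ^ q) a = b := by
    obtain ⟨q', he⟩ : ∃ q', q = q' + 1 := ⟨q - 1, by omega⟩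
    rw [he, pow_apply_succ, key q' (by omega), hγ, Equiv.Perm.mul_apply]
    have : π ((π ^ q') a) = a := by rw [← pow_apply_succ, ← he]; exact hqa
    rw [this, Equiv.swap_apply_left]
  exact ⟨(q : ℤ), by rw [zpow_natCast]; exact hfin⟩

/-- If `a,b` are in one cycle, after multiplying by the swap they are in different ones. -/
lemma not_sc_swap_of_sc (hab : a ≠ b) (h : π.SameCycle a b) :
    ¬(Equiv.swap a b * π).SameCycle a b := by
  classical
  set γ := Equiv.swap a b * π with hγ
  obtain ⟨n, hn⟩ := sc_exists_nat h
  have hn0 : 0 < n := by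
    rcases Nat.eq_zero_or_pos n with rfl | h'
    · exact absurd (by simpa using hn) hab
    · exact h'
  have hex : ∃ k, 0 < k ∧ (π ^ k) a = b := ⟨n, hn0, hn⟩
  set k := Nat.find hex with hk
  obtain ⟨hk0, hkb⟩ : 0 < k ∧ (π ^ k) a = b := Nat.find_spec hex
  have hmin : ∀ j, 0 < j → j < k → (π ^ j) a ≠ b := by
    intro j hj0 hjk hjb
    exact Nat.find_min hex hjk ⟨hj0, hjb⟩
  set S : Set D := {z | ∃ j, j < k ∧ (π ^ j) a = z} with hS
  have haS : a ∈ S := ⟨0, hk0, rfl⟩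
  have hbS : b ∉ S := by
    rintro ⟨j, hjk, hjb⟩
    rcases Nat.eq_zero_or_pos j with rfl | hj0
    · exact hab (by simpa using hjb)
    · exact hmin j hj0 hjk hjb
  have hclosed : ∀ z ∈ S, γ z ∈ S := by
    rintro z ⟨j, hjk, rfl⟩
    rw [hγ, Equiv.Perm.mul_apply]
    rcases Nat.lt_or_ge (j + 1) k with hlt | hge
    · have h1 : π ((π ^ j) a) ≠ b := by rw [← pow_apply_succ]; exact hmin _ (Nat.succ_pos _) hlt
      have h2 : π ((π ^ j) a) ≠ a := by
        intro ha
        have : (π ^ (j + 1)) a = a := by rw [pow_apply_succ]; exact ha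
        -- then b = π^(k - j - 1) a with 0 < k-j-1 < k, contradiction
        have hb' : (π ^ (k - (j+1))) a = b := by
          have : (π ^ (k - (j+1))) ((π ^ (j+1)) a) = (π ^ k) a := by
            rw [← Equiv.Perm.mul_apply, ← pow_add]
            congr 2
            omega
          rw [‹(π ^ (j+1)) a = a›] at this
          rw [this, hkb]
        have h0 : 0 < k - (j+1) := by omega
        exact hmin _ h0 (by omega) hb'
      rw [Equiv.swap_apply_of_ne_of_ne h2 h1]
      exact ⟨j + 1, hlt, pow_apply_succ π j a⟩
    · have hjk1 : j + 1 = k := by omega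
      have : π ((π ^ j) a) = b := by rw [← pow_apply_succ, hjk1]; exact hkb
      rw [this, Equiv.swap_apply_right]
      exact haS
  intro hsc
  exact hbS (sc_mem_closed hclosed haS hsc)

/-- If `a,b` are in one `π`-cycle, the cycles of `swap a b * π` refine those of `π`. -/
lemma sc_swap_le_of_sc (h : π.SameCycle a b) {x y : D}
    (hxy : (Equiv.swap a b * π).SameCycle x y) : π.SameCycle x y := by
  classical
  refine sc_implies (Equiv.swap a b * π) (scS π) ?_ hxy
  intro z
  show π.SameCycle z (Equiv.swap a b (π z))
  by_cases h1 : π z = a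
  · rw [h1, Equiv.swap_apply_left]
    exact Equiv.Perm.SameCycle.trans (h1 ▸ sc_of_pow π 1 z |>.symm).symm h
  · by_cases h2 : π z = b
    · rw [h2, Equiv.swap_apply_right]
      exact Equiv.Perm.SameCycle.trans (h2 ▸ (sc_of_pow π 1 z).symm).symm h.symm
    · rw [Equiv.swap_apply_of_ne_of_ne h1 h2]
      simpa using sc_of_pow π 1 z

/-- Splitting a cycle: the number of cycles goes up by (at least) one. -/
lemma cyc_swap_of_sc (hab : a ≠ b) (h : π.SameCycle a b) :
    cyc π + 1 ≤ cyc (Equiv.swap a b * π) :=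
  quot_add_one_le (scS π) (scS (Equiv.swap a b * π)) a b
    (fun _ _ => sc_swap_le_of_sc π h) h (not_sc_swap_of_sc π hab h)

/-- Generic: multiplying by a swap decreases the cycle count by at most one. -/
lemma cyc_le_swap_add_one (hab : a ≠ b) :
    cyc π ≤ cyc (Equiv.swap a b * π) + 1 := by
  classical
  by_cases h : π.SameCycle a b
  · have := cyc_swap_of_sc π hab h
    omega
  · set γ := Equiv.swap a b * π with hγ
    have hγab : γ.SameCycle a b := sc_swap_of_not π hab h
    have hππ : Equiv.swap a b * γ = π := by
      rw [hγ, ← mul_assoc, Equiv.swap_mul_self, one_mul]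
    have hle : ∀ x y, π.SameCycle x y → γ.SameCycle x y := by
      intro x y hxy
      exact sc_swap_le_of_sc γ hγab (by rw [hππ]; exact hxy)
    have hker : ∀ x y, γ.SameCycle x y →
        π.SameCycle x y ∨ ((π.SameCycle x a ∨ π.SameCycle x b) ∧
          (π.SameCycle y a ∨ π.SameCycle y b)) := by
      intro x y hxy
      by_cases hxa : π.SameCycle x a ∨ π.SameCycle x b
      · right
        refine ⟨hxa, ?_⟩
        set S : Set D := {z | π.SameCycle z a ∨ π.SameCycle z b} with hS
        have hclosed : ∀ z ∈ S, γ z ∈ S := by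
          intro z hz
          rw [hγ, Equiv.Perm.mul_apply]
          have hπz : π.SameCycle (π z) a ∨ π.SameCycle (π z) b := by
            rcases hz with hz | hz
            · exact Or.inl (Equiv.Perm.sameCycle_apply_left.mpr hz)
            · exact Or.inr (Equiv.Perm.sameCycle_apply_left.mpr hz)
          by_cases h1 : π z = a
          · rw [h1, Equiv.swap_apply_left]
            exact Or.inr (Equiv.Perm.SameCycle.refl _ _)
          · by_cases h2 : π z = b
            · rw [h2, Equiv.swap_apply_right]
              exact Or.inl (Equiv.Perm.SameCycle.refl _ _)
            · rw [Equiv.swap_apply_of_ne_of_ne h1 h2]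
              exact hπz
        exact sc_mem_closed hclosed hxa hxy
      · left
        push_neg at hxa
        set S : Set D := {z | π.SameCycle x z} with hS
        have hclosed : ∀ z ∈ S, γ z ∈ S := by
          intro z hz
          rw [hγ, Equiv.Perm.mul_apply]
          have h1 : π z ≠ a := by
            intro he
            exact hxa.1 (he ▸ Equiv.Perm.SameCycle.trans hz (by simpa using sc_of_pow π 1 z))
          have h2 : π z ≠ b := by
            intro he
            exact hxa.2 (he ▸ Equiv.Perm.SameCycle.trans hz (by simpa using sc_of_pow π 1 z))
          rw [Equiv.swap_apply_of_ne_of_ne h1 h2]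
          exact Equiv.Perm.SameCycle.trans hz (by simpa using sc_of_pow π 1 z)
        exact sc_mem_closed hclosed (Equiv.Perm.SameCycle.refl _ _) hxy
    exact quot_le_of_ker (scS π) (scS γ) a b hle hker

end Swap

section Orbits

/-- Orbit setoid of the group generated by two permutations. -/
def oS (g h : Perm D) : Setoid D :=
  Relation.EqvGen.setoid (fun x y => g x = y ∨ h x = y)

/-- Number of connected components. -/
noncomputable def orbs (g h : Perm D) : ℕ := Nat.card (Quotient (oS g h))

/-- Setoid generated by a setoid together with one extra pair. -/
def sP (s : Setoid D) (a b : D) : Setoid D :=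
  Relation.EqvGen.setoid (fun x y => s.r x y ∨ (x = a ∧ y = b))

lemma eqvGen_le {r : D → D → Prop} (s : Setoid D) (h : ∀ x y, r x y → s.r x y) :
    ∀ x y, Relation.EqvGen r x y → s.r x y := by
  intro x y hxy
  induction hxy with
  | rel x y hr => exact h x y hr
  | refl x => exact s.iseqv.refl x
  | symm x y _ ih => exact s.iseqv.symm ih
  | trans x y z _ _ ih1 ih2 => exact s.iseqv.trans ih1 ih2

lemma oS_le (g h : Perm D) (s : Setoid D) (hg : ∀ x, s.r x (g x)) (hh : ∀ x, s.r x (h x)) :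
    ∀ x y, (oS g h).r x y → s.r x y := by
  refine eqvGen_le s ?_
  rintro x y (rfl | rfl)
  · exact hg x
  · exact hh x

lemma oS_step_g (g h : Perm D) (x : D) : (oS g h).r x (g x) :=
  Relation.EqvGen.rel _ _ (Or.inl rfl)

lemma oS_step_h (g h : Perm D) (x : D) : (oS g h).r x (h x) :=
  Relation.EqvGen.rel _ _ (Or.inr rfl)

lemma sc_apply (π : Perm D) (z : D) : π.SameCycle z (π z) := ⟨1, by simp⟩

lemma sc_le_oS (g h : Perm D) {x y : D} (hsc : g.SameCycle x y) : (oS g h).r x y :=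
  sc_implies g (oS g h) (oS_step_g g h) hsc

lemma sP_step (s : Setoid D) (a b : D) {x y : D} (h : s.r x y) : (sP s a b).r x y :=
  Relation.EqvGen.rel _ _ (Or.inl h)

lemma sP_pair (s : Setoid D) (a b : D) : (sP s a b).r a b :=
  Relation.EqvGen.rel _ _ (Or.inr ⟨rfl, rfl⟩)

lemma sP_r_iff (s : Setoid D) (a b x y : D) : (sP s a b).r x y ↔
    s.r x y ∨ (s.r x a ∧ s.r b y) ∨ (s.r x b ∧ s.r a y) := by
  constructor
  · intro hxy
    have hxy' : Relation.EqvGen (fun x y => s.r x y ∨ (x = a ∧ y = b)) x y := hxy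
    clear hxy
    induction hxy' with
    | rel x y hr =>
      rcases hr with hr | ⟨rfl, rfl⟩
      · exact Or.inl hr
      · exact Or.inr (Or.inl ⟨s.iseqv.refl _, s.iseqv.refl _⟩)
    | refl x => exact Or.inl (s.iseqv.refl x)
    | symm x y _ ih =>
      rcases ih with h | ⟨h1, h2⟩ | ⟨h1, h2⟩
      · exact Or.inl (s.iseqv.symm h)
      · exact Or.inr (Or.inr ⟨s.iseqv.symm h2, s.iseqv.symm h1⟩)
      · exact Or.inr (Or.inl ⟨s.iseqv.symm h2, s.iseqv.symm h1⟩)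
    | trans x y z _ _ ih1 ih2 =>
      rcases ih1 with h | ⟨h1, h2⟩ | ⟨h1, h2⟩ <;>
        rcases ih2 with h' | ⟨h1', h2'⟩ | ⟨h1', h2'⟩
      · exact Or.inl (s.iseqv.trans h h')
      · exact Or.inr (Or.inl ⟨s.iseqv.trans h h1', h2'⟩)
      · exact Or.inr (Or.inr ⟨s.iseqv.trans h h1', h2'⟩)
      · exact Or.inr (Or.inl ⟨h1, s.iseqv.trans h2 h'⟩)
      · exact Or.inl (s.iseqv.trans (s.iseqv.trans h1 (s.iseqv.symm
          (s.iseqv.trans h2 h1'))) (s.iseqv.trans h2 (s.iseqv.trans h1' (s.iseqv.trans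
          (s.iseqv.symm (s.iseqv.trans h2 h1')) h2'))))
      · exact Or.inl (s.iseqv.trans h1 h2')
      · exact Or.inr (Or.inr ⟨h1, s.iseqv.trans h2 h'⟩)
      · exact Or.inl (s.iseqv.trans h1 h2')
      · exact Or.inl (s.iseqv.trans (s.iseqv.trans h1 (s.iseqv.symm
          (s.iseqv.trans h2 h1'))) (s.iseqv.trans h2 (s.iseqv.trans h1' (s.iseqv.trans
          (s.iseqv.symm (s.iseqv.trans h2 h1')) h2'))))
  · rintro (h | ⟨h1, h2⟩ | ⟨h1, h2⟩)
    · exact sP_step s a b h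
    · exact (sP s a b).iseqv.trans (sP_step s a b h1)
        ((sP s a b).iseqv.trans (sP_pair s a b) (sP_step s a b h2))
    · exact (sP s a b).iseqv.trans (sP_step s a b h1)
        ((sP s a b).iseqv.trans ((sP s a b).iseqv.symm (sP_pair s a b)) (sP_step s a b h2))

lemma sP_eq_of_rel (s : Setoid D) (a b : D) (hab : s.r a b) : sP s a b = s := by
  apply Setoid.ext
  intro x y
  rw [show (sP s a b) x y ↔ (sP s a b).r x y from Iff.rfl, sP_r_iff]
  constructor
  · rintro (h | ⟨h1, h2⟩ | ⟨h1, h2⟩)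
    · exact h
    · exact s.iseqv.trans h1 (s.iseqv.trans hab h2)
    · exact s.iseqv.trans h1 (s.iseqv.trans (s.iseqv.symm hab) h2)
  · exact Or.inl

/-- the key bookkeeping identity for the genus induction. -/
lemma sP_oS_eq (g h g' h' t : Perm D) (a b : D) (hb : b = h a) (ht : t = Equiv.swap a b)
    (hg' : g' = g * t) (hh' : h' = t * h) : sP (oS g' h') a b = oS g h := by
  have htt : ∀ x, t (t x) = x := by
    intro x; rw [ht]; simp
  have htx1 : ∀ x, (oS g h).r x (t x) := by
    intro x
    by_cases hxa : x = a
    · rw [hxa, ht, Equiv.swap_apply_left, hb]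
      exact oS_step_h g h a
    · by_cases hxb : x = b
      · rw [hxb, ht, Equiv.swap_apply_right]
        exact (oS g h).iseqv.symm (by rw [hb]; exact oS_step_h g h a)
      · rw [ht, Equiv.swap_apply_of_ne_of_ne hxa hxb]
  have htx2 : ∀ x, (sP (oS g' h') a b).r x (t x) := by
    intro x
    by_cases hxa : x = a
    · rw [hxa, ht, Equiv.swap_apply_left]
      exact sP_pair _ a b
    · by_cases hxb : x = b
      · rw [hxb, ht, Equiv.swap_apply_right]
        exact (sP (oS g' h') a b).iseqv.symm (sP_pair _ a b)
      · rw [ht, Equiv.swap_apply_of_ne_of_ne hxa hxb]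
  apply Setoid.ext
  intro x y
  constructor
  · -- sP (oS g' h') a b → oS g h
    refine eqvGen_le (oS g h) ?_ x y
    rintro x y (hr | ⟨rfl, rfl⟩)
    · refine eqvGen_le (oS g h) ?_ x y hr
      rintro x y (rfl | rfl)
      · -- y = g' x = g (t x)
        have : g' x = g (t x) := by rw [hg', Equiv.Perm.mul_apply]
        rw [this]
        exact (oS g h).iseqv.trans (htx1 x) (oS_step_g g h (t x))
      · -- y = h' x = t (h x)
        have : h' x = t (h x) := by rw [hh', Equiv.Perm.mul_apply]
        rw [this]
        exact (oS g h).iseqv.trans (oS_step_h g h x) (htx1 (h x))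
    · rw [hb]
      exact oS_step_h g h _
  · -- oS g h → sP (oS g' h')
    refine eqvGen_le (sP (oS g' h') a b) ?_ x y
    rintro x y (rfl | rfl)
    · -- y = g x = g' (t x)
      have : g x = g' (t x) := by rw [hg', Equiv.Perm.mul_apply, htt]
      rw [this]
      exact (sP (oS g' h') a b).iseqv.trans (htx2 x)
        (sP_step _ a b (oS_step_g g' h' (t x)))
    · -- y = h x = t (h' x)
      have : h x = t (h' x) := by rw [hh', Equiv.Perm.mul_apply, htt]
      rw [this]
      exact (sP (oS g' h') a b).iseqv.trans (sP_step _ a b (oS_step_h g' h' x))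
        (htx2 (h' x))

lemma cyc_one : cyc (1 : Perm D) = Fintype.card D := by
  have hbij : Function.Bijective (Quotient.mk (scS (1 : Perm D))) := by
    constructor
    · intro x y hxy
      obtain ⟨i, hi⟩ := Quotient.exact hxy
      simpa using hi
    · intro u
      induction u using Quotient.ind with | _ x => exact ⟨x, rfl⟩
  rw [cyc, ← Nat.card_eq_of_bijective _ hbij, Nat.card_eq_fintype_card]

lemma orbs_one (g : Perm D) : orbs g 1 = cyc g := by
  have : oS g (1 : Perm D) = scS g := by
    apply Setoid.ext
    intro x y
    constructor
    · refine eqvGen_le (scS g) ?_ x y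
      rintro x y (rfl | rfl)
      · exact sc_apply g x
      · exact Equiv.Perm.SameCycle.refl _ _
    · exact fun h => sc_le_oS g 1 h
  rw [orbs, this, cyc]

end Orbits

section Genus

theorem genus_aux : ∀ (N : ℕ) (g h : Perm D), h.support.card ≤ N →
    cyc g + cyc h + cyc (g * h) ≤ Fintype.card D + 2 * orbs g h := by
  intro N
  induction N with
  | zero =>
    intro g h hc
    have h1 : h = 1 := by
      rw [← Equiv.Perm.support_eq_empty_iff]
      exact Finset.card_eq_zero.mp (Nat.le_zero.mp hc)
    subst h1
    rw [mul_one, cyc_one, orbs_one]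
    omega
  | succ N ih =>
    intro g h hc
    by_cases h1 : h = 1
    · subst h1
      rw [mul_one, cyc_one, orbs_one]
      omega
    obtain ⟨a, ha⟩ : ∃ a, h a ≠ a := by
      by_contra hno
      push_neg at hno
      exact h1 (Equiv.ext hno)
    set b := h a with hb
    have hab : a ≠ b := fun e => ha (hb.symm ▸ e.symm)
    set t := Equiv.swap a b with ht
    set h' := t * h with hh'
    set g' := g * t with hg'
    have htt : t * t = 1 := by rw [ht]; exact Equiv.swap_mul_self a b
    have hgh : g' * h' = g * h := by
      rw [hg', hh', mul_assoc, ← mul_assoc t, htt, one_mul]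
    have hsub : h'.support ⊆ h.support.erase a := by
      intro x hx
      rw [Finset.mem_erase]
      have hx' : h' x ≠ x := Equiv.Perm.mem_support.mp hx
      constructor
      · intro e
        subst e
        apply hx'
        rw [hh', Equiv.Perm.mul_apply, ← hb, ht, Equiv.swap_apply_right]
      · rw [Equiv.Perm.mem_support]
        intro e
        apply hx'
        have hxa : x ≠ a := by
          rintro rfl
          exact ha e
        have hxb : x ≠ b := by
          rintro rfl
          exact hab (h.injective (hb.symm.trans e.symm))
        rw [hh', Equiv.Perm.mul_apply, e, ht, Equiv.swap_apply_of_ne_of_ne hxa hxb]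
    have hsupp : h'.support.card ≤ N := by
      have h2 : (h.support.erase a).card < h.support.card :=
        Finset.card_erase_lt_of_mem (Equiv.Perm.mem_support.mpr ha)
      have h3 := Finset.card_le_card hsub
      omega
    have IH := ih g' h' hsupp
    rw [hgh] at IH
    have hscab : h.SameCycle a b := hb ▸ sc_apply h a
    have hh1 : cyc h + 1 ≤ cyc h' := by
      rw [hh', ht]
      exact cyc_swap_of_sc h hab hscab
    have hconj : Equiv.swap (g a) (g b) * g = g' := by
      rw [Equiv.swap_apply_apply, hg', ht]
      group
    have hAB : g a ≠ g b := fun e => hab (g.injective e)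
    have hEQ : sP (oS g' h') a b = oS g h := sP_oS_eq g h g' h' t a b hb ht hg' hh'
    by_cases hsc : g.SameCycle a b
    · -- split case
      have hscAB : g.SameCycle (g a) (g b) := by
        rw [Equiv.Perm.sameCycle_apply_left, Equiv.Perm.sameCycle_apply_right]
        exact hsc
      have hg1 : cyc g + 1 ≤ cyc g' := by
        rw [← hconj]
        exact cyc_swap_of_sc g hAB hscAB
      have horb : orbs g' h' ≤ orbs g h + 1 := by
        have hq := quot_le_of_ker (oS g' h') (sP (oS g' h') a b) a b
          (fun x y hxy => sP_step _ a b hxy)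
          (by
            intro x y hxy
            rcases (sP_r_iff (oS g' h') a b x y).mp hxy with hr | ⟨h1', h2'⟩ | ⟨h1', h2'⟩
            · exact Or.inl hr
            · exact Or.inr ⟨Or.inl h1', Or.inr ((oS g' h').iseqv.symm h2')⟩
            · exact Or.inr ⟨Or.inr h1', Or.inl ((oS g' h').iseqv.symm h2')⟩)
        rw [hEQ] at hq
        exact hq
      omega
    · -- merge case
      have hscAB : ¬g.SameCycle (g a) (g b) := by
        rw [Equiv.Perm.sameCycle_apply_left, Equiv.Perm.sameCycle_apply_right]
        exact hsc
      have hg1 : cyc g ≤ cyc g' + 1 := by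
        rw [← hconj]
        exact cyc_le_swap_add_one g hAB
      have hscg' : g'.SameCycle a b := by
        have h3 : (Equiv.swap (g a) (g b) * g).SameCycle (g a) (g b) :=
          sc_swap_of_not g hAB hscAB
        rw [hconj] at h3
        have e1 : g' a = g b := by rw [hg', Equiv.Perm.mul_apply, ht, Equiv.swap_apply_left]
        have e2 : g' b = g a := by rw [hg', Equiv.Perm.mul_apply, ht, Equiv.swap_apply_right]
        exact ((e1 ▸ sc_apply g' a).trans h3.symm).trans (e2 ▸ (sc_apply g' b).symm)
      have horb : orbs g' h' = orbs g h := by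
        have hos : oS g' h' = oS g h := by
          rw [← hEQ, sP_eq_of_rel (oS g' h') a b (sc_le_oS g' h' hscg')]
        rw [orbs, orbs, hos]
      omega

end Genus

section Invol

lemma two_mul_quot (s : Setoid D) (β : Perm D) (hfix : ∀ z, β z ≠ z)
    (hinv : ∀ z, β (β z) = z)
    (hiff : ∀ x y, s.r x y ↔ (y = x ∨ y = β x)) :
    Fintype.card D = 2 * Nat.card (Quotient s) := by
  classical
  have hout : ∀ x : D, x = (Quotient.mk s x).out ∨ x = β ((Quotient.mk s x).out) := by
    intro x
    have h1 : Quotient.mk s ((Quotient.mk s x).out) = Quotient.mk s x :=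
      Quotient.out_eq _
    have h2 : s.r ((Quotient.mk s x).out) x := Quotient.exact h1
    exact (hiff _ _).mp h2
  let F : D → Quotient s × Bool := fun x =>
    (Quotient.mk s x, decide (x = (Quotient.mk s x).out))
  have hbij : Function.Bijective F := by
    constructor
    · intro x y hxy
      have h1 : Quotient.mk s x = Quotient.mk s y := congrArg Prod.fst hxy
      have h2 : (x = (Quotient.mk s x).out) ↔ (y = (Quotient.mk s y).out) := by
        have h2' := congrArg Prod.snd hxy
        simpa [F, decide_eq_decide] using h2'
      have hoo : (Quotient.mk s x).out = (Quotient.mk s y).out := by rw [h1]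
      rcases hout x with hx | hx <;> rcases hout y with hy | hy
      · rw [hx, hy, hoo]
      · exfalso
        exact hfix _ (hy.symm.trans (h2.mp hx))
      · exfalso
        exact hfix _ (hx.symm.trans (h2.mpr hy))
      · rw [hx, hy, hoo]
    · rintro ⟨c, bb⟩
      by_cases hb : bb = true
      · subst hb
        refine ⟨c.out, ?_⟩
        show (Quotient.mk s c.out, decide (c.out = (Quotient.mk s c.out).out)) = (c, true)
        rw [Quotient.out_eq c]
        simp
      · have hb' : bb = false := by cases bb <;> simp_all
        subst hb'
        refine ⟨β c.out, ?_⟩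
        have h5 : s.r c.out (β c.out) := (hiff _ _).mpr (Or.inr rfl)
        have h3 : Quotient.mk s (β c.out) = c := by
          rw [← (Quotient.sound h5 : Quotient.mk s c.out = Quotient.mk s (β c.out))]
          exact Quotient.out_eq c
        show (Quotient.mk s (β c.out), decide (β c.out = (Quotient.mk s (β c.out)).out)) = (c, false)
        rw [h3]
        have h6 : decide (β c.out = c.out) = false := by
          simp only [decide_eq_false_iff_not]
          exact hfix c.out
        rw [h6]
  have := Nat.card_eq_of_bijective F hbij
  rw [Nat.card_eq_fintype_card] at this
  rw [this, Nat.card_prod]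
  have : Nat.card Bool = 2 := by rw [Nat.card_eq_fintype_card]; rfl
  rw [this]
  ring

lemma sc_invol (β : Perm D) (hinv : ∀ z, β (β z) = z) (x y : D) :
    β.SameCycle x y ↔ (y = x ∨ y = β x) := by
  constructor
  · intro h
    obtain ⟨n, rfl⟩ := sc_exists_nat h
    have key : ∀ n : ℕ, (β ^ n) x = x ∨ (β ^ n) x = β x := by
      intro n
      induction n with
      | zero => exact Or.inl rfl
      | succ n ih =>
        rcases ih with h' | h' <;> rw [pow_apply_succ, h']
        · exact Or.inr rfl
        · exact Or.inl (hinv x)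
    exact key n
  · rintro (rfl | rfl)
    · exact Equiv.Perm.SameCycle.refl _ _
    · exact sc_apply β x

lemma card_eq_two_mul_cyc_invol (β : Perm D) (hfix : ∀ z, β z ≠ z)
    (hinv : ∀ z, β (β z) = z) : Fintype.card D = 2 * cyc β :=
  two_mul_quot (scS β) β hfix hinv (sc_invol β hinv)

end Invol

end STP



/-- A ribbon (fat) graph, encoded by its set of darts `D` together with the vertex
rotation permutation `σ` and the fixed-point-free edge involution `α`.  Vertices are the
orbits of `σ`, edges the orbits of `α`, and faces the orbits of `φ = σ ∘ α`. -/
structure Ribbon where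
  D : Type
  [fin : Fintype D]
  [deq : DecidableEq D]
  σ : Equiv.Perm D
  α : Equiv.Perm D
  αfix : ∀ d, α d ≠ d
  αinv : ∀ d, α (α d) = d

namespace Ribbon

variable (G : Ribbon)

instance : Fintype G.D := G.fin
instance : DecidableEq G.D := G.deq

/-- The face permutation of the ribbon graph. -/
def φ : Equiv.Perm G.D := G.σ * G.α

/-- Two darts lie on the same vertex. -/
def sameVertex : G.D → G.D → Prop := G.σ.SameCycle

/-- Two darts lie on the same face. -/
def sameFace : G.D → G.D → Prop := G.φ.SameCycle

/-- Two darts belong to the same edge. -/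
def sameEdge (d e : G.D) : Prop := e = d ∨ e = G.α d

def vSetoid : Setoid G.D :=
  ⟨G.sameVertex, ⟨fun _ => Equiv.Perm.SameCycle.refl _ _,
    Equiv.Perm.SameCycle.symm, Equiv.Perm.SameCycle.trans⟩⟩

def fSetoid : Setoid G.D :=
  ⟨G.sameFace, ⟨fun _ => Equiv.Perm.SameCycle.refl _ _,
    Equiv.Perm.SameCycle.symm, Equiv.Perm.SameCycle.trans⟩⟩

def eSetoid : Setoid G.D where
  r := G.sameEdge
  iseqv := by
    constructor
    · intro x; exact Or.inl rfl
    · intro x y h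
      rcases h with h | h
      · exact Or.inl h.symm
      · subst h; exact Or.inr (G.αinv x).symm
    · intro x y z h1 h2
      rcases h1 with h1 | h1 <;> rcases h2 with h2 | h2
      · subst h1; exact Or.inl h2
      · subst h1; exact Or.inr h2
      · subst h1; subst h2; exact Or.inr rfl
      · subst h1; subst h2; rw [G.αinv]; exact Or.inl rfl

/-- Number of vertices. -/
noncomputable def nV : ℕ := Nat.card (Quotient G.vSetoid)
/-- Number of edges. -/
noncomputable def nE : ℕ := Nat.card (Quotient G.eSetoid)
/-- Number of faces. -/
noncomputable def nF : ℕ := Nat.card (Quotient G.fSetoid)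

/-- Euler characteristic `V - E + F` of the underlying closed orientable surface. -/
noncomputable def eulerChar : ℤ := (G.nV : ℤ) - G.nE + G.nF

/-- All vertices are trivalent. -/
def Trivalent : Prop := ∀ d, G.σ d ≠ d ∧ G.σ (G.σ d) ≠ d ∧ G.σ (G.σ (G.σ d)) = d

/-- The ribbon graph is connected. -/
def Connected : Prop :=
  ∀ d e : G.D, Relation.ReflTransGen (fun a b => G.σ a = b ∨ G.α a = b) d e

/-- Planarity: genus zero, i.e. Euler characteristic `2`. -/
noncomputable def Planar : Prop := G.eulerChar = 2

/-- One-particle irreducibility (no bridges): any two darts can be joined by a path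
avoiding any prescribed edge. -/
def OnePI : Prop :=
  ∀ d₀ a b : G.D,
    Relation.ReflTransGen (fun x y => G.σ x = y ∨ (G.α x = y ∧ ¬ G.sameEdge d₀ x)) a b

/-- The faces of the graph. -/
def Face := Quotient G.fSetoid

noncomputable instance : Fintype G.Face := by
  classical exact Quotient.fintype G.fSetoid

/-- The face on which the dart `d` lies. -/
def faceOf (d : G.D) : G.Face := Quotient.mk G.fSetoid d

/-- The edge of the dart `d` borders the face `f` (with one of its two sides). -/
def borders (d : G.D) (f : G.Face) : Prop := G.faceOf d = f ∨ G.faceOf (G.α d) = f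

/-- First type 1 condition: every 2D vertex/edge of the ancestor of a face projects to a
unique 1D vertex/edge of that face.  Equivalently: the faces around every vertex are
pairwise distinct, and each edge appears at most once on any given face boundary. -/
def TypeOneI : Prop :=
  (∀ d e, G.sameVertex d e → G.sameFace d e → d = e) ∧ ∀ d, ¬ G.sameFace d (G.α d)

/-- The 1D intersection of (the cycle of) a face `f` with the union of the ancestor
graphs of the faces in `J`: the darts of `f` whose edge borders some face of `J`. -/
def interSet (f : G.Face) (J : Set G.Face) : Set G.D :=
  {x | G.faceOf x = f ∧ ∃ j ∈ J, G.borders x j}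

/-- A subset of a face cycle is connected (an arc): any two of its members are joined by
steps of the face permutation staying inside the subset. -/
def ArcConnected (S : Set G.D) : Prop :=
  ∀ x ∈ S, ∀ y ∈ S,
    Relation.ReflTransGen (fun a b => (G.φ a = b ∨ G.φ b = a) ∧ a ∈ S ∧ b ∈ S) x y

/-- Second type 1 condition: for every face `f₁` there is a total ordering
`f₁ < f₂ < … < f_n` of all faces such that the intersection of each `f_i` with the union
of the ancestors of the previous faces is nonempty and connected, and `f_i` is not
contained in that union (except possibly the last face). -/
def TypeOneII : Prop :=
  ∀ f₁ : G.Face, ∃ (n : ℕ) (ord : Fin n ≃ G.Face),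
    (∀ h : 0 < n, ord ⟨0, h⟩ = f₁) ∧
    ∀ i : Fin n, 0 < i.1 →
      (G.interSet (ord i) {g | ∃ j, j < i ∧ ord j = g}).Nonempty ∧
      G.ArcConnected (G.interSet (ord i) {g | ∃ j, j < i ∧ ord j = g}) ∧
      (i.1 + 1 < n →
        ∃ x, G.faceOf x = ord i ∧ x ∉ G.interSet (ord i) {g | ∃ j, j < i ∧ ord j = g})

/-- A 2D GFT graph is of type 1. -/
def TypeOne : Prop := G.TypeOneI ∧ G.TypeOneII

end Ribbon


namespace RibbonAux
open STP Equiv Equiv.Perm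

variable (G : Ribbon)

lemma phi_apply (z : G.D) : G.φ z = G.σ (G.α z) := rfl

lemma lemA (htri : G.Trivalent) (hsep : ∀ d, ¬ G.sameFace d (G.α d)) :
    ∀ d : G.D, ¬ G.φ.SameCycle (G.α d) (G.α (G.φ d)) := by
  intro d hSC
  set x := G.α d with hx
  have e1 : G.φ (G.α (G.σ x)) = G.σ (G.σ x) := by
    rw [phi_apply, G.αinv]
  have e2 : G.φ (G.α (G.σ (G.σ x))) = x := by
    rw [phi_apply, G.αinv]
    exact (htri x).2.2
  have hφd : G.φ d = G.σ x := by rw [phi_apply]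
  rw [hφd] at hSC
  have s1 : G.φ.SameCycle (G.α (G.σ x)) (G.σ (G.σ x)) := ⟨1, by rw [zpow_one]; exact e1⟩
  have s2 : G.φ.SameCycle (G.α (G.σ (G.σ x))) x := ⟨1, by rw [zpow_one]; exact e2⟩
  exact hsep (G.σ (G.σ x)) (s1.symm.trans (hSC.symm.trans s2.symm))

lemma nV_eq : G.nV = cyc G.σ := rfl

lemma nF_eq : G.nF = cyc G.φ := rfl

lemma card_eq_two_nE : Fintype.card G.D = 2 * G.nE :=
  two_mul_quot G.eSetoid G.α G.αfix G.αinv (fun _ _ => Iff.rfl)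

lemma face_pow (n : ℕ) (z : G.D) : G.faceOf ((G.φ ^ n) z) = G.faceOf z :=
  Quotient.sound (sc_of_pow G.φ n z).symm

lemma face_exact {z w : G.D} (h : G.faceOf z = G.faceOf w) : G.φ.SameCycle z w :=
  Quotient.exact h

end RibbonAux
/-- In a connected planar trivalent fat graph in which every edge
separates two distinct faces, for every face `f₁` there exists a face `f₂` sharing
exactly one edge with `f₁`. -/
theorem planar_exists_face_sharing_exactly_one_edge (G : Ribbon)
    (htri : G.Trivalent) (hconn : G.Connected) (hplanar : G.Planar)
    (hsep : ∀ d : G.D, ¬ G.sameFace d (G.α d)) (f₁ : G.Face) :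
    ∃ f₂ : G.Face, f₂ ≠ f₁ ∧
      ∃! e : Quotient G.eSetoid, ∃ d : G.D,
        Quotient.mk G.eSetoid d = e ∧ G.borders d f₁ ∧ G.borders d f₂ := by
  classical
  open STP RibbonAux in
  by_contra hcon
  push_neg at hcon
  -- Step 1: every dart of f₁ has a partner dart of f₁ on a different edge with the
  -- same neighbouring face.
  have hsep' : ∀ z : G.D, G.faceOf (G.α z) ≠ G.faceOf z := by
    intro z he
    exact hsep z (face_exact G he).symm
  have hM : ∀ x : G.D, G.faceOf x = f₁ →
      ∃ y, G.faceOf y = f₁ ∧ y ≠ x ∧ G.faceOf (G.α y) = G.faceOf (G.α x) := by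
    intro x hx
    set f₂ := G.faceOf (G.α x) with hf₂
    have hne : f₂ ≠ f₁ := by
      rw [hf₂, ← hx]
      exact hsep' x
    have hnu := hcon f₂ hne
    rw [ExistsUnique] at hnu
    push_neg at hnu
    obtain ⟨e', hPe', hne'⟩ := hnu (Quotient.mk G.eSetoid x)
      ⟨x, rfl, Or.inl hx, Or.inr hf₂.symm⟩
    obtain ⟨dd, hdd, hbd1, hbd2⟩ := hPe'
    rcases hbd1 with hb1 | hb1
    · refine ⟨dd, hb1, ?_, ?_⟩
      · intro he
        exact hne' (by rw [← hdd, he])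
      · rcases hbd2 with hb2 | hb2
        · exact absurd (hb1.symm.trans hb2) (Ne.symm hne)
        · exact hb2.symm ▸ hf₂.symm ▸ rfl
    · refine ⟨G.α dd, hb1, ?_, ?_⟩
      · intro he
        refine hne' (by rw [← hdd]; exact Quotient.sound (Or.inr (by rw [← he])))
      · have hb2 : G.faceOf dd = f₂ := by
          rcases hbd2 with hb2 | hb2
          · exact hb2
          · exact absurd (hb1.symm.trans hb2) (Ne.symm hne)
        rw [G.αinv, hb2, hf₂]
  -- Step 2: pick a minimal "gap" between two darts of f₁ with equal neighbour face.
  obtain ⟨d₀, hd₀⟩ := Quotient.exists_rep f₁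
  have hd₀f : G.faceOf d₀ = f₁ := hd₀
  have hGap : ∃ m, 0 < m ∧ ∃ x, G.faceOf x = f₁ ∧ (G.φ ^ m) x ≠ x ∧
      G.faceOf (G.α ((G.φ ^ m) x)) = G.faceOf (G.α x) := by
    obtain ⟨y₀, hy₀f, hy₀ne, hy₀lab⟩ := hM d₀ hd₀f
    obtain ⟨n₀, hn₀⟩ := sc_exists_nat (face_exact G (hd₀f.trans hy₀f.symm))
    have hn₀0 : 0 < n₀ := by
      rcases Nat.eq_zero_or_pos n₀ with rfl | h'
      · exact absurd (by simpa using hn₀.symm) hy₀ne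
      · exact h'
    exact ⟨n₀, hn₀0, d₀, hd₀f, by rw [hn₀]; exact hy₀ne, by rw [hn₀]; exact hy₀lab⟩
  set m := Nat.find hGap with hmdef
  obtain ⟨hm0, d, hdf, hdne, hlab⟩ := Nat.find_spec hGap
  rw [← hmdef] at hm0 hdne hlab
  have hmin : ∀ j, j < m → ¬(0 < j ∧ ∃ x, G.faceOf x = f₁ ∧ (G.φ ^ j) x ≠ x ∧
      G.faceOf (G.α ((G.φ ^ j) x)) = G.faceOf (G.α x)) := fun j hj => Nat.find_min hGap hj
  -- period of d
  have hexp := exists_period G.φ d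
  set p := Nat.find hexp with hpdef
  obtain ⟨hp0, hpd⟩ : 0 < p ∧ (G.φ ^ p) d = d := Nat.find_spec hexp
  have hpmin : ∀ j, 0 < j → j < p → (G.φ ^ j) d ≠ d := by
    intro j hj0 hjp hj
    exact Nat.find_min hexp hjp ⟨hj0, hj⟩
  have hmp : m < p := by
    by_contra hge
    push_neg at hge
    have h1 : (G.φ ^ m) d = (G.φ ^ (m % p)) d := pow_mod hpd m
    have h2 : m % p ≠ 0 := by
      intro he
      rw [he] at h1
      exact hdne (by simpa using h1)
    refine hmin (m % p) (lt_of_lt_of_le (Nat.mod_lt _ hp0) hge)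
      ⟨Nat.pos_of_ne_zero h2, d, hdf, by rw [← h1]; exact hdne, by rw [← h1]; exact hlab⟩
  have hm2 : 2 ≤ m := by
    rcases Nat.lt_or_ge m 2 with h' | h'
    · exfalso
      have hm1 : m = 1 := by omega
      rw [hm1, pow_one] at hlab
      exact lemA G htri hsep d ((face_exact G hlab).symm)
    · exact h'
  set d' := (G.φ ^ m) d with hd'def
  have hd'f : G.faceOf d' = f₁ := by rw [hd'def, face_pow]; exact hdf
  have hdd' : d ≠ d' := fun e => hdne e.symm
  have hgf1 : G.faceOf (G.α d) ≠ f₁ := by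
    rw [← hdf]; exact hsep' d
  have hfz : ∀ z w : G.D, G.faceOf z = f₁ → G.faceOf w = G.faceOf (G.α d) → z ≠ w := by
    intro z w h1 h2 e
    exact hgf1 (by rw [← h2, ← e, h1])
  -- the dart next to d on f₁
  set u := G.φ d with hudef
  have hu1 : u = (G.φ ^ 1) d := by rw [pow_one]
  have huf : G.faceOf u = f₁ := by rw [hu1, face_pow]; exact hdf
  have hp3 : u ≠ d := by
    intro he
    have : (G.φ ^ m) d = (G.φ ^ (m % 1)) d := pow_mod (by rw [pow_one, ← hudef]; exact he) m
    rw [Nat.mod_one, pow_zero, Equiv.Perm.one_apply] at this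
    exact hdne (by rw [hd'def]; exact this)
  have hp1 : 1 < p := by
    rcases Nat.lt_or_ge 1 p with h' | h'
    · exact h'
    · exfalso
      have : p = 1 := by omega
      rw [this, pow_one, ← hudef] at hpd
      exact hp3 hpd
  have hhg : G.faceOf (G.α u) ≠ G.faceOf (G.α d) := by
    intro he
    refine hmin 1 (by omega) ⟨one_pos, d, hdf, ?_, ?_⟩
    · rw [pow_one, ← hudef]; exact hp3
    · rw [pow_one, ← hudef]; exact he
  obtain ⟨y, hyf, hyne, hylab⟩ := hM u huf
  obtain ⟨n₁, hn₁⟩ := sc_exists_nat (face_exact G (hdf.trans hyf.symm))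
  set q := n₁ % p with hqdef
  have hq : (G.φ ^ q) d = y := by rw [hqdef, ← pow_mod hpd]; exact hn₁
  have hqp : q < p := Nat.mod_lt _ hp0
  have hq0 : q ≠ 0 := by
    intro he
    rw [he] at hq
    simp at hq
    apply hhg
    rw [← hylab, hq]
  have hq1 : q ≠ 1 := by
    intro he
    rw [he, pow_one, ← hudef] at hq
    exact hyne hq.symm
  have hqm : m < q := by
    rcases Nat.lt_or_ge q (m + 1) with h' | h'
    · exfalso
      -- 2 ≤ q ≤ m : gives a smaller gap from u
      have hq2 : 2 ≤ q := by omega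
      have hqy : (G.φ ^ (q - 1)) u = y := by
        rw [hudef, ← Equiv.Perm.mul_apply, ← pow_succ, show q - 1 + 1 = q by omega, hq]
      refine hmin (q - 1) (by omega) ⟨by omega, u, huf, ?_, ?_⟩
      · rw [hqy]
        exact hyne
      · rw [hqy]
        exact hylab
    · omega
  -- Step 3: the surgery on the two edges at d and d'.
  set A := G.α d with hAdef
  set A' := G.α d' with hA'def
  have hAA' : A ≠ A' := fun e => hdd' (G.α.injective (by rw [← hAdef, ← hA'def, e]))
  have hdA : d ≠ A := hfz d A hdf rfl
  have hdA' : d ≠ A' := hfz d A' hdf hlab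
  have hd'A : d' ≠ A := hfz d' A hd'f rfl
  have hd'A' : d' ≠ A' := hfz d' A' hd'f hlab
  set t₁ := Equiv.swap d d' with ht₁
  set t₂ := Equiv.swap A A' with ht₂
  set α' := G.α * t₁ * t₂ with hα'def
  have hα'A : α' A = d' := by
    rw [hα'def, Equiv.Perm.mul_apply, Equiv.Perm.mul_apply, ht₂, Equiv.swap_apply_left, ht₁,
      Equiv.swap_apply_of_ne_of_ne (Ne.symm hdA') (Ne.symm hd'A'), hA'def, G.αinv]
  have hα'A' : α' A' = d := by
    rw [hα'def, Equiv.Perm.mul_apply, Equiv.Perm.mul_apply, ht₂, Equiv.swap_apply_right, ht₁,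
      Equiv.swap_apply_of_ne_of_ne (Ne.symm hdA) (Ne.symm hd'A), hAdef, G.αinv]
  have hα'd : α' d = A' := by
    rw [hα'def, Equiv.Perm.mul_apply, Equiv.Perm.mul_apply, ht₂,
      Equiv.swap_apply_of_ne_of_ne hdA hdA', ht₁, Equiv.swap_apply_left, hA'def]
  have hα'd' : α' d' = A := by
    rw [hα'def, Equiv.Perm.mul_apply, Equiv.Perm.mul_apply, ht₂,
      Equiv.swap_apply_of_ne_of_ne hd'A hd'A', ht₁, Equiv.swap_apply_right, hAdef]
  have hα'z : ∀ z, z ≠ d → z ≠ d' → z ≠ A → z ≠ A' → α' z = G.α z := by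
    intro z h1 h2 h3 h4
    rw [hα'def, Equiv.Perm.mul_apply, Equiv.Perm.mul_apply, ht₂,
      Equiv.swap_apply_of_ne_of_ne h3 h4, ht₁, Equiv.swap_apply_of_ne_of_ne h1 h2]
  have hα'fix : ∀ z, α' z ≠ z := by
    intro z
    by_cases h1 : z = d
    · rw [h1, hα'd]; exact Ne.symm hdA'
    · by_cases h2 : z = d'
      · rw [h2, hα'd']; exact Ne.symm hd'A
      · by_cases h3 : z = A
        · rw [h3, hα'A]; exact fun e => hd'A e
        · by_cases h4 : z = A'
          · rw [h4, hα'A']; exact fun e => hdA' e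
          · rw [hα'z z h1 h2 h3 h4]; exact G.αfix z
  have hα'inv : ∀ z, α' (α' z) = z := by
    intro z
    by_cases h1 : z = d
    · rw [h1, hα'd, hα'A']
    · by_cases h2 : z = d'
      · rw [h2, hα'd', hα'A]
      · by_cases h3 : z = A
        · rw [h3, hα'A, hα'd']
        · by_cases h4 : z = A'
          · rw [h4, hα'A', hα'd]
          · rw [hα'z z h1 h2 h3 h4]
            have k1 : G.α z ≠ d := fun e => h3 (by rw [hAdef, ← e, G.αinv])
            have k2 : G.α z ≠ d' := fun e => h4 (by rw [hA'def, ← e, G.αinv])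
            have k3 : G.α z ≠ A := fun e => h1 (G.α.injective (e.trans hAdef))
            have k4 : G.α z ≠ A' := fun e => h2 (G.α.injective (e.trans hA'def))
            rw [hα'z (G.α z) k1 k2 k3 k4, G.αinv]
  have hσα' : G.σ * α' = G.φ * t₁ * t₂ := by
    rw [hα'def]
    simp [Ribbon.φ, mul_assoc]
  -- Step 4: the face count goes up by two.
  have hscdd' : G.φ.SameCycle d d' := by rw [hd'def]; exact sc_of_pow G.φ m d
  have hφne : G.φ d ≠ G.φ d' := fun e => hdd' (G.φ.injective e)
  have hscφ : G.φ.SameCycle (G.φ d) (G.φ d') := by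
    rw [Equiv.Perm.sameCycle_apply_left, Equiv.Perm.sameCycle_apply_right]
    exact hscdd'
  have e1 : Equiv.swap (G.φ d) (G.φ d') * G.φ = G.φ * t₁ := by
    rw [Equiv.swap_apply_apply, ht₁]
    group
  have hcyc1 : cyc G.φ + 1 ≤ cyc (G.φ * t₁) := by
    rw [← e1]
    exact cyc_swap_of_sc G.φ hφne hscφ
  set π₁ := G.φ * t₁ with hπ₁def
  have hπ₁z : ∀ z, z ≠ d → z ≠ d' → π₁ z = G.φ z := by
    intro z h1 h2
    rw [hπ₁def, Equiv.Perm.mul_apply, ht₁, Equiv.swap_apply_of_ne_of_ne h1 h2]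
  have hscAA' : G.φ.SameCycle A A' := (face_exact G hlab).symm
  have hscπ₁ : π₁.SameCycle A A' := by
    refine sc_congr {z | G.faceOf z = G.faceOf A} ?_ ?_ rfl hscAA'
    · intro z hz
      exact hπ₁z z (Ne.symm (hfz d z hdf hz)) (Ne.symm (hfz d' z hd'f hz))
    · intro z hz
      show G.faceOf (G.φ z) = G.faceOf A
      rw [show G.φ z = (G.φ ^ 1) z by rw [pow_one], face_pow]
      exact hz
  have hπ₁A : π₁ A = G.φ A := hπ₁z A (Ne.symm hdA) (Ne.symm hd'A)
  have hπ₁A' : π₁ A' = G.φ A' := hπ₁z A' (Ne.symm hdA') (Ne.symm hd'A')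
  have hscπ₁' : π₁.SameCycle (G.φ A) (G.φ A') := by
    rw [← hπ₁A, ← hπ₁A', Equiv.Perm.sameCycle_apply_left, Equiv.Perm.sameCycle_apply_right]
    exact hscπ₁
  have hφAne : G.φ A ≠ G.φ A' := fun e => hAA' (G.φ.injective e)
  have e2 : Equiv.swap (G.φ A) (G.φ A') * π₁ = π₁ * t₂ := by
    rw [← hπ₁A, ← hπ₁A', Equiv.swap_apply_apply, ht₂]
    group
  have hcyc2 : cyc π₁ + 1 ≤ cyc (π₁ * t₂) := by
    rw [← e2]
    exact cyc_swap_of_sc π₁ hφAne hscπ₁'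
  have hcycF : cyc G.φ + 2 ≤ cyc (G.σ * α') := by
    rw [hσα']
    omega
  -- Step 5: the surgered graph is still connected (using the crossing chord).
  set sC := oS G.σ α' with hsCdef
  have rstepσ : ∀ z, sC.r z (G.σ z) := oS_step_g G.σ α'
  have rstepα : ∀ z, sC.r z (α' z) := oS_step_h G.σ α'
  have rφ : ∀ z, z ≠ d → z ≠ d' → z ≠ A → z ≠ A' → sC.r z (G.φ z) := by
    intro z h1 h2 h3 h4
    have he : G.φ z = G.σ (α' z) := by rw [hα'z z h1 h2 h3 h4]; rfl
    rw [he]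
    exact sC.iseqv.trans (rstepα z) (rstepσ (α' z))
  have rarc : ∀ (z : G.D) (n : ℕ),
      (∀ i, i < n → ((G.φ ^ i) z ≠ d ∧ (G.φ ^ i) z ≠ d' ∧ (G.φ ^ i) z ≠ A ∧ (G.φ ^ i) z ≠ A')) →
      sC.r z ((G.φ ^ n) z) := by
    intro z n
    induction n with
    | zero => intro _; exact sC.iseqv.refl z
    | succ n ih =>
      intro hcond
      rw [pow_apply_succ]
      obtain ⟨c1, c2, c3, c4⟩ := hcond n (Nat.lt_succ_self n)
      exact sC.iseqv.trans (ih fun i hi => hcond i (by omega)) (rφ _ c1 c2 c3 c4)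
  have hpos : ∀ j, j < p → j ≠ 0 → j ≠ m →
      ((G.φ ^ j) d ≠ d ∧ (G.φ ^ j) d ≠ d' ∧ (G.φ ^ j) d ≠ A ∧ (G.φ ^ j) d ≠ A') := by
    intro j hj hj0 hjm
    refine ⟨hpmin j (by omega) hj, ?_, ?_, ?_⟩
    · rw [hd'def]
      rcases Nat.lt_or_ge j m with h' | h'
      · exact pow_inj hpmin h' hmp
      · exact (pow_inj hpmin (by omega) hj).symm
    · exact hfz _ A (by rw [face_pow]; exact hdf) rfl
    · exact hfz _ A' (by rw [face_pow]; exact hdf) hlab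
  have hoff : ∀ z : G.D, G.faceOf z ≠ f₁ → G.faceOf z ≠ G.faceOf A →
      (z ≠ d ∧ z ≠ d' ∧ z ≠ A ∧ z ≠ A') := by
    intro z h1 h2
    refine ⟨?_, ?_, ?_, ?_⟩
    · intro e; exact h1 (by rw [e, hdf])
    · intro e; exact h1 (by rw [e, hd'f])
    · intro e; exact h2 (by rw [e])
    · intro e; exact h2 (by rw [e]; exact hlab)
  have hc1 : sC.r u d' := by
    have harcu : sC.r u ((G.φ ^ (m - 1)) u) := by
      refine rarc u (m - 1) ?_
      intro i hi
      have he : (G.φ ^ i) u = (G.φ ^ (i + 1)) d := by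
        rw [hudef, ← Equiv.Perm.mul_apply, ← pow_succ]
      rw [he]
      exact hpos (i + 1) (by omega) (by omega) (by omega)
    have he : (G.φ ^ (m - 1)) u = d' := by
      rw [hudef, ← Equiv.Perm.mul_apply, ← pow_succ, show m - 1 + 1 = m by omega, hd'def]
    rwa [he] at harcu
  have huQ := hpos 1 hp1 one_ne_zero (by omega)
  rw [pow_one, ← hudef] at huQ
  have hc2 : sC.r u (G.α u) := by
    rw [← hα'z u huQ.1 huQ.2.1 huQ.2.2.1 huQ.2.2.2]
    exact rstepα u
  have hyQ := hpos q hqp hq0 (by omega)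
  rw [hq] at hyQ
  have hc4 : sC.r y (G.α y) := by
    rw [← hα'z y hyQ.1 hyQ.2.1 hyQ.2.2.1 hyQ.2.2.2]
    exact rstepα y
  have hfhne1 : G.faceOf (G.α u) ≠ f₁ := by rw [← huf]; exact hsep' u
  have hc3 : sC.r (G.α u) (G.α y) := by
    obtain ⟨k, hk⟩ := sc_exists_nat (face_exact G hylab).symm
    have harc := rarc (G.α u) k ?_
    · rwa [hk] at harc
    · intro i hi
      refine hoff _ ?_ ?_
      · rw [face_pow]; exact hfhne1
      · rw [face_pow]; exact hhg
  have hc5 : sC.r y d := by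
    have he : (G.φ ^ (p - q)) y = d := by
      rw [← hq, ← Equiv.Perm.mul_apply, ← pow_add, show p - q + q = p by omega, hpd]
    have harcy := rarc y (p - q) ?_
    · rwa [he] at harcy
    · intro i hi
      rw [← hq, ← Equiv.Perm.mul_apply, ← pow_add]
      exact hpos (i + q) (by omega) (by omega) (by omega)
  have hcd'd : sC.r d' d :=
    sC.iseqv.trans (sC.iseqv.symm hc1) (sC.iseqv.trans hc2 (sC.iseqv.trans hc3
      (sC.iseqv.trans (sC.iseqv.symm hc4) hc5)))
  have hcdA' : sC.r d A' := by rw [← hα'd]; exact rstepα d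
  have hcd'A : sC.r d' A := by rw [← hα'd']; exact rstepα d'
  have hcAd : sC.r A d := sC.iseqv.trans (sC.iseqv.symm hcd'A) hcd'd
  have hcA'd : sC.r A' d := sC.iseqv.symm hcdA'
  have hcdA : sC.r d A := sC.iseqv.trans hcdA' (sC.iseqv.trans hcA'd (sC.iseqv.symm hcAd))
  have htotal : ∀ z, sC.r z d := by
    have key : ∀ z w : G.D, Relation.ReflTransGen (fun a b => G.σ a = b ∨ G.α a = b) z w →
        sC.r z w := by
      intro z w hzw
      induction hzw with
      | refl => exact sC.iseqv.refl _
      | tail _ hstep ih =>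
        rename_i bmid c _
        refine sC.iseqv.trans ih ?_
        rcases hstep with he | he
        · rw [← he]
          exact rstepσ _
        · by_cases h1 : bmid = d
          · have hc' : c = A := by rw [← he, h1, hAdef]
            rw [h1, hc']
            exact hcdA
          · by_cases h2 : bmid = d'
            · have hc' : c = A' := by rw [← he, h2, hA'def]
              rw [h2, hc']
              exact sC.iseqv.trans hcd'd (sC.iseqv.symm hcA'd)
            · by_cases h3 : bmid = A
              · have hc' : c = d := by rw [← he, h3, hAdef, G.αinv]
                rw [h3, hc']
                exact hcAd
              · by_cases h4 : bmid = A'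
                · have hc' : c = d' := by rw [← he, h4, hA'def, G.αinv]
                  rw [h4, hc']
                  exact sC.iseqv.trans hcA'd (sC.iseqv.symm hcd'd)
                · rw [← he, ← hα'z bmid h1 h2 h3 h4]
                  exact rstepα bmid
    exact fun z => key z d (hconn z d)
  have horb : orbs G.σ α' = 1 := by
    have hsub : Subsingleton (Quotient sC) := by
      constructor
      intro x y
      induction x using Quotient.ind with | _ x => ?_
      induction y using Quotient.ind with | _ y => ?_
      exact Quotient.sound (sC.iseqv.trans (htotal x) (sC.iseqv.symm (htotal y)))
    rw [orbs]
    haveI := hsub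
    haveI : Nonempty (Quotient sC) := ⟨Quotient.mk _ d⟩
    exact Nat.card_eq_one_iff_unique.mpr ⟨hsub, ⟨Quotient.mk _ d⟩⟩
  -- Step 6: Euler characteristic contradiction.
  have hgenus := genus_aux (α'.support.card) G.σ α' le_rfl
  rw [horb] at hgenus
  have hE' : Fintype.card G.D = 2 * cyc α' := card_eq_two_mul_cyc_invol α' hα'fix hα'inv
  have hE : Fintype.card G.D = 2 * G.nE := card_eq_two_nE G
  have hV : G.nV = cyc G.σ := nV_eq G
  have hF : G.nF = cyc G.φ := nF_eq G
  have hP : (G.nV : ℤ) - G.nE + G.nF = 2 := hplanar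
  omega
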